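/- The family (e_A), indexed by A : Finset (Fin n), of classes of the square-free monomials ∏_{i ∈ A} X i is a K-module basis of the n-th order tangent algebra K^n_{(t,s)}; in particular K^n_{(t,s)} is a free K-module of rank 2^n. -/

import Mathlib

open MvPolynomial

/-- The defining ideal of the `n`-th order tangent algebra `K^n_{(t,s)}`:
generated by the elements `(X i - C (t i)) * (X i - C (s i))` for `i : Fin n`. -/
noncomputable abbrev tangentIdeal (K : Type*) [CommRing K] {n : ℕ} (t s : Fin n → K) :
    Ideal (MvPolynomial (Fin n) K) :=
  Ideal.span (Set.range fun i : Fin n => (X i - C (t i)) * (X i - C (s i)))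

/-- The `n`-th order tangent algebra `K^n_{(t,s)}`. -/
abbrev TangentAlgebra (K : Type*) [CommRing K] {n : ℕ} (t s : Fin n → K) :=
  MvPolynomial (Fin n) K ⧸ tangentIdeal K t s

namespace TangentAux

open Finset

variable {K : Type*} [CommRing K] {n : ℕ}

/-- Coefficients of the reduction of `X^k` modulo `(X - u)(X - v)`:
`X^k ≡ (ab u v k).1 * X + (ab u v k).2`. -/
def ab (u v : K) : ℕ → K × K
  | 0 => (0, 1)
  | k + 1 => ((ab u v k).1 * (u + v) + (ab u v k).2, -((ab u v k).1 * (u * v)))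

lemma ab_fst_rec (u v : K) (k : ℕ) :
    (ab u v (k + 2)).1 = (u + v) * (ab u v (k + 1)).1 - u * v * (ab u v k).1 := by
  simp [ab]; ring

lemma ab_snd_rec (u v : K) (k : ℕ) :
    (ab u v (k + 2)).2 = (u + v) * (ab u v (k + 1)).2 - u * v * (ab u v k).2 := by
  simp [ab]; ring

/-- Reduction of the monomial `X^d` in the square-free monomial "basis". -/
def red (t s : Fin n → K) (d : Fin n →₀ ℕ) (A : Finset (Fin n)) : K :=
  ∏ j : Fin n, if j ∈ A then (ab (t j) (s j) (d j)).1 else (ab (t j) (s j) (d j)).2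

lemma red_factor (t s : Fin n → K) (d : Fin n →₀ ℕ) (i : Fin n) (A : Finset (Fin n)) :
    red t s d A = (if i ∈ A then (ab (t i) (s i) (d i)).1 else (ab (t i) (s i) (d i)).2) *
      ∏ j ∈ univ.erase i,
        (if j ∈ A then (ab (t j) (s j) (d j)).1 else (ab (t j) (s j) (d j)).2) := by
  rw [red, ← Finset.mul_prod_erase _ _ (mem_univ i)]

lemma red_rec (t s : Fin n → K) (d : Fin n →₀ ℕ) (i : Fin n) (A : Finset (Fin n)) :
    red t s (d + Finsupp.single i 2) A
      = (t i + s i) * red t s (d + Finsupp.single i 1) A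
        - (t i * s i) * red t s d A := by
  have hrest : ∀ k : ℕ, ∀ j ∈ univ.erase i,
      (if j ∈ A then (ab (t j) (s j) ((d + Finsupp.single i k) j)).1
        else (ab (t j) (s j) ((d + Finsupp.single i k) j)).2)
      = (if j ∈ A then (ab (t j) (s j) (d j)).1 else (ab (t j) (s j) (d j)).2) := by
    intro k j hj
    have hji : j ≠ i := (Finset.mem_erase.mp hj).1
    simp [Finsupp.single_apply, hji.symm]
  have hi : ∀ k : ℕ, (d + Finsupp.single i k) i = d i + k := by
    intro k; simp
  rw [red_factor t s _ i A, red_factor t s _ i A, red_factor t s d i A,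
    Finset.prod_congr rfl (hrest 2), Finset.prod_congr rfl (hrest 1), hi, hi]
  by_cases h : i ∈ A
  · simp only [if_pos h, ab_fst_rec]; ring
  · simp only [if_neg h, ab_snd_rec]; ring

/-- The `K`-linear reduction map. -/
noncomputable def psi (t s : Fin n → K) :
    MvPolynomial (Fin n) K →ₗ[K] (Finset (Fin n) → K) :=
  (basisMonomials (Fin n) K).constr K (red t s)

lemma psi_monomial (t s : Fin n → K) (d : Fin n →₀ ℕ) (c : K) :
    psi t s (monomial d c) = c • red t s d := by
  have : (monomial d c : MvPolynomial (Fin n) K) = c • monomial d 1 := by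
    rw [smul_monomial, smul_eq_mul, mul_one]
  rw [this, map_smul, psi]
  congr 1
  have := (basisMonomials (Fin n) K).constr_basis K (red t s) d
  rwa [coe_basisMonomials] at this

/-- key expansion of `monomial d 1 * g i` -/
lemma monomial_mul_gen (t s : Fin n → K) (d : Fin n →₀ ℕ) (i : Fin n) :
    monomial d (1 : K) * ((X i - C (t i)) * (X i - C (s i)))
      = monomial (d + Finsupp.single i 2) 1
        - (t i + s i) • monomial (d + Finsupp.single i 1) 1
        + (t i * s i) • monomial d 1 := by
  have h2 : (X i : MvPolynomial (Fin n) K) ^ 2 = monomial (Finsupp.single i 2) 1 :=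
    X_pow_eq_monomial
  have h1 : (X i : MvPolynomial (Fin n) K) = monomial (Finsupp.single i 1) 1 := by
    rw [← pow_one (X i), X_pow_eq_monomial]
  have expand : ((X i - C (t i)) * (X i - C (s i)) : MvPolynomial (Fin n) K)
      = X i ^ 2 - C (t i + s i) * X i + C (t i * s i) := by rw [C_add, C_mul]; ring
  rw [expand, h2, h1, smul_eq_C_mul, smul_eq_C_mul]
  simp only [mul_add, mul_sub, monomial_mul, C_mul_monomial, mul_one, one_mul,
    mul_comm (monomial d (1:K)) (C (t i * s i))]

lemma psi_mul_gen (t s : Fin n → K) (p : MvPolynomial (Fin n) K) (i : Fin n) :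
    psi t s (p * ((X i - C (t i)) * (X i - C (s i)))) = 0 := by
  have : (psi t s).comp
      (LinearMap.mulRight K ((X i - C (t i)) * (X i - C (s i)))) = 0 := by
    apply (basisMonomials (Fin n) K).ext
    intro d
    rw [coe_basisMonomials]
    simp only [LinearMap.comp_apply, LinearMap.mulRight_apply, LinearMap.zero_apply]
    rw [monomial_mul_gen, map_add, map_sub, map_smul, map_smul,
      psi_monomial, psi_monomial, psi_monomial, one_smul, one_smul, one_smul]
    funext A
    simp only [Pi.add_apply, Pi.sub_apply, Pi.smul_apply, smul_eq_mul, Pi.zero_apply]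
    rw [red_rec t s d i A]
    ring
  have := congrFun (congrArg (↑·) this) p
  simpa [mul_assoc] using this

lemma psi_ideal (t s : Fin n → K) {x : MvPolynomial (Fin n) K}
    (hx : x ∈ tangentIdeal K t s) : psi t s x = 0 := by
  rw [tangentIdeal, Ideal.mem_span_range_iff_exists_fun] at hx
  obtain ⟨c, rfl⟩ := hx
  rw [map_sum]
  exact Finset.sum_eq_zero fun i _ => psi_mul_gen t s (c i) i

/-- the exponent multidegree of the square-free monomial `∏_{i ∈ A} X i` -/
noncomputable def deg (A : Finset (Fin n)) : Fin n →₀ ℕ := ∑ i ∈ A, Finsupp.single i 1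

lemma deg_apply (A : Finset (Fin n)) (j : Fin n) :
    deg A j = if j ∈ A then 1 else 0 := by
  classical
  rw [deg, Finsupp.finset_sum_apply]
  simp [Finsupp.single_apply]

lemma prod_X_eq (A : Finset (Fin n)) :
    (∏ i ∈ A, X i : MvPolynomial (Fin n) K) = monomial (deg A) 1 := by
  classical
  induction A using Finset.induction_on with
  | empty => simp [deg]
  | @insert a A' h ih =>
    rw [Finset.prod_insert h, ih]
    have hdeg : deg (insert a A') = Finsupp.single a 1 + deg A' := by
      rw [deg, deg, Finset.sum_insert h]
    rw [hdeg, show (X a : MvPolynomial (Fin n) K) = monomial (Finsupp.single a 1) 1 by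
      rw [← pow_one (X a), X_pow_eq_monomial], monomial_mul, one_mul]

lemma red_deg (t s : Fin n → K) (A B : Finset (Fin n)) :
    red t s (deg A) B = if B = A then 1 else 0 := by
  classical
  by_cases h : B = A
  · subst h
    rw [if_pos rfl, red]
    refine Finset.prod_eq_one fun j _ => ?_
    by_cases hj : j ∈ B <;> simp [hj, deg_apply, ab]
  · rw [if_neg h, red]
    have : ∃ j, ¬ (j ∈ B ↔ j ∈ A) := by
      by_contra hc
      push_neg at hc
      exact h (Finset.ext fun j => hc j)
    obtain ⟨j, hj⟩ := this
    refine Finset.prod_eq_zero (mem_univ j) ?_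
    by_cases hB : j ∈ B
    · have hA : j ∉ A := fun hA => hj ⟨fun _ => hA, fun _ => hB⟩
      simp [hB, hA, deg_apply, ab]
    · have hA : j ∈ A := by
        by_contra hA
        exact hj ⟨fun h' => absurd h' hB, fun h' => absurd h' hA⟩
      simp [hB, hA, deg_apply, ab]

lemma prod_smul_fin {Q : Type*} [CommRing Q] [Algebra K Q]
    (A : Finset (Fin n)) (c : Fin n → K) (f : Fin n → Q) :
    ∏ i ∈ A, c i • f i = (∏ i ∈ A, c i) • ∏ i ∈ A, f i := by
  classical
  induction A using Finset.cons_induction with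
  | empty => simp
  | cons a A ha ih => rw [prod_cons, prod_cons, prod_cons, ih, smul_mul_smul_comm]

end TangentAux

open TangentAux Finset in
/-- The classes `e_A` of the square-free monomials `∏_{i ∈ A} X i`, indexed by
`A : Finset (Fin n)`, form a `K`-basis of the tangent algebra `K^n_{(t,s)}`;
in particular it is a free `K`-module of rank `2^n`. -/
theorem tangentAlgebra_basis (K : Type*) [CommRing K] (n : ℕ) (t s : Fin n → K) :
    ∃ b : Module.Basis (Finset (Fin n)) K (TangentAlgebra K t s),
      ∀ A : Finset (Fin n),
        b A = Ideal.Quotient.mk (tangentIdeal K t s) (∏ i ∈ A, X i) := by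
  classical
  set I := tangentIdeal K t s with hI
  set v : Finset (Fin n) → TangentAlgebra K t s :=
    fun A => Ideal.Quotient.mk I (∏ i ∈ A, X i) with hv
  -- the quotient map as an algebra hom
  set mk : MvPolynomial (Fin n) K →ₐ[K] TangentAlgebra K t s := Ideal.Quotient.mkₐ K I
    with hmk
  have hmkeq : ∀ p, mk p = Ideal.Quotient.mk I p := fun p => by
    rw [hmk, Ideal.Quotient.mkₐ_eq_mk]
  -- the generators die in the quotient
  have hgen : ∀ i : Fin n, mk ((X i - C (t i)) * (X i - C (s i))) = 0 := by
    intro i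
    rw [hmkeq, Ideal.Quotient.eq_zero_iff_mem]
    exact Ideal.subset_span ⟨i, rfl⟩
  -- reduction of squares
  have hX2 : ∀ i : Fin n,
      mk (X i) ^ 2 = (t i + s i) • mk (X i) - (t i * s i) • 1 := by
    intro i
    have hid : ((X i - C (t i)) * (X i - C (s i)) : MvPolynomial (Fin n) K)
        = X i ^ 2 - ((t i + s i) • X i - (t i * s i) • 1) := by
      rw [smul_eq_C_mul, smul_eq_C_mul, C_add, C_mul]; ring
    have := hgen i
    rw [hid, map_sub, map_sub, map_pow, map_smul, map_smul, map_one,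
      sub_eq_zero] at this
    exact this
  -- reduction of arbitrary powers
  have key : ∀ (i : Fin n) (k : ℕ),
      mk (X i) ^ k = (ab (t i) (s i) k).1 • mk (X i) + (ab (t i) (s i) k).2 • 1 := by
    intro i k
    induction k with
    | zero => simp [ab]
    | succ k ih =>
      rw [pow_succ, ih, add_mul, smul_mul_assoc, smul_mul_assoc, one_mul,
        ← sq, hX2 i]
      simp only [ab, smul_sub, smul_smul]
      module
  -- linear independence via the reduction map `psi`
  have hLI : LinearIndependent K v := by
    rw [Fintype.linearIndependent_iff]
    intro g hg
    have h0 : mk (∑ A : Finset (Fin n), g A • ∏ i ∈ A, X i) = 0 := by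
      rw [map_sum]
      simp only [map_smul]
      simp only [hmkeq]
      exact hg
    have hmem : (∑ A : Finset (Fin n), g A • ∏ i ∈ A, X i) ∈ I := by
      rw [hmkeq, Ideal.Quotient.eq_zero_iff_mem] at h0
      exact h0
    have hψ := psi_ideal t s hmem
    rw [map_sum] at hψ
    have hψ' : (∑ A : Finset (Fin n), g A • red t s (deg A)) = 0 := by
      rw [← hψ]
      refine Finset.sum_congr rfl fun A _ => ?_
      rw [map_smul, prod_X_eq, psi_monomial, one_smul]
    intro B
    have := congrFun hψ' B
    simp only [Finset.sum_apply, Pi.smul_apply, smul_eq_mul, Pi.zero_apply,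
      red_deg, mul_ite, mul_one, mul_zero] at this
    rwa [Finset.sum_ite_eq univ B g, if_pos (mem_univ B)] at this
  -- spanning
  have hspan : ⊤ ≤ Submodule.span K (Set.range v) := by
    have hmono : ∀ d : Fin n →₀ ℕ,
        Ideal.Quotient.mk I (monomial d 1) ∈ Submodule.span K (Set.range v) := by
      intro d
      have h1 : (monomial d (1 : K) : MvPolynomial (Fin n) K)
          = ∏ i : Fin n, X i ^ d i := by
        rw [monomial_eq, C_1, one_mul, Finsupp.prod_pow]
      rw [← hmkeq, h1, map_prod]
      have h2 : ∀ i : Fin n, mk (X i ^ d i)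
          = (ab (t i) (s i) (d i)).1 • mk (X i) + (ab (t i) (s i) (d i)).2 • 1 := by
        intro i; rw [map_pow]; exact key i (d i)
      rw [Finset.prod_congr rfl fun i _ => h2 i, Finset.prod_add]
      refine Submodule.sum_mem _ fun A _ => ?_
      have e1 := prod_smul_fin (K := K) A (fun i => (ab (t i) (s i) (d i)).1)
        (fun i => mk (X i))
      have e2 := prod_smul_fin (K := K) (univ \ A) (fun i => (ab (t i) (s i) (d i)).2)
        (fun _ => (1 : TangentAlgebra K t s))
      rw [e1, e2, Finset.prod_const_one, smul_mul_smul_comm, mul_one, ← map_prod]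
      refine Submodule.smul_mem _ _ (Submodule.subset_span ⟨A, ?_⟩)
      rw [hv, hmkeq]
    rintro x -
    obtain ⟨p, rfl⟩ := Ideal.Quotient.mk_surjective x
    rw [p.as_sum, map_sum]
    refine Submodule.sum_mem _ fun d _ => ?_
    have : (monomial d (coeff d p) : MvPolynomial (Fin n) K)
        = (coeff d p) • monomial d 1 := by
      rw [smul_monomial, smul_eq_mul, mul_one]
    rw [this, ← hmkeq, map_smul]
    exact Submodule.smul_mem _ _ (by rw [hmkeq]; exact hmono d)
  refine ⟨Module.Basis.mk hLI hspan, fun A => ?_⟩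
  rw [Module.Basis.mk_apply]
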